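/- There exists δ > 0 such that for all sufficiently small ε > 0, the equation x = 2e^ε sinh(x) / (e^ε cosh(x) + e^{-ε}) has a unique solution x_ε in the open interval (0, δ), and moreover |x_ε − √(12ε)| ≤ C·ε^{3/2} for some constant C independent of ε. -/

import Mathlib

open Real Set

lemma h_taylor {x : ℝ} (hx0 : 0 ≤ x) (hx : x ≤ 2/5) :
    -x + x^3/6 ≤ x * Real.cosh x - 2 * Real.sinh x ∧
    x * Real.cosh x - 2 * Real.sinh x ≤ -x + x^3/6 + x^5/30 := by
  have hax : |x| ≤ 1 := by rw [abs_of_nonneg hx0]; linarith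
  have h1 := Real.exp_bound hax (n := 6) (by norm_num)
  have hax' : |(-x)| ≤ 1 := by rwa [abs_neg]
  have h2 := Real.exp_bound hax' (n := 6) (by norm_num)
  rw [abs_of_nonneg hx0] at h1
  rw [abs_neg, abs_of_nonneg hx0] at h2
  simp only [Finset.sum_range_succ, Finset.sum_range_zero] at h1 h2
  norm_num [Nat.factorial] at h1 h2
  rw [abs_le] at h1 h2
  rw [Real.cosh_eq, Real.sinh_eq]
  constructor <;> nlinarith [h1.1, h1.2, h2.1, h2.2, pow_nonneg hx0 6, pow_nonneg hx0 5,
    mul_nonneg (pow_nonneg hx0 5) hx0, sq_nonneg x,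
    mul_le_mul_of_nonneg_left h1.2 (by linarith : (0:ℝ) ≤ 2 - x),
    mul_le_mul_of_nonneg_left h2.2 (by linarith : (0:ℝ) ≤ 2 + x),
    mul_le_mul_of_nonneg_left h1.1 (by linarith : (0:ℝ) ≤ 2 - x),
    mul_le_mul_of_nonneg_left h2.1 (by linarith : (0:ℝ) ≤ 2 + x)]

lemma poly_a {s : ℝ} (hs : 0 < s) (hsq : s^2 ≤ 49/400) :
    (s - s^3) + (1 + s^2/6) * (-(s - s^3) + (s-s^3)^3/6 + (s-s^3)^5/30) < 0 := by
  have h7 : s^7 ≤ (49/400) * s^5 := by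
    nlinarith [mul_le_mul_of_nonneg_right hsq (pow_pos hs 5).le]
  have h9 : s^9 ≤ (49/400)^2 * s^5 := by
    nlinarith [mul_le_mul_of_nonneg_right hsq (pow_pos hs 7).le, h7]
  have h11 : s^11 ≤ (49/400)^3 * s^5 := by
    nlinarith [mul_le_mul_of_nonneg_right hsq (pow_pos hs 9).le, h9]
  have h13 : s^13 ≤ (49/400)^4 * s^5 := by
    nlinarith [mul_le_mul_of_nonneg_right hsq (pow_pos hs 11).le, h11]
  nlinarith [h7, h9, h13, pow_pos hs 5, pow_pos hs 11, pow_pos hs 15, pow_pos hs 17]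

lemma poly_b {s : ℝ} (hs : 0 < s) :
    0 < (s + s^3) + (-(1 + s^2/6 + s^4/48) * (s + s^3) + (s+s^3)^3/6) := by
  nlinarith [pow_pos hs 5, pow_pos hs 7, pow_pos hs 9]

lemma poly_c {a : ℝ} (h0 : 0 ≤ a) (h1 : a ≤ 1) : -a + a^3/6 + a^5/30 ≤ 0 := by
  have ha2 : a^2 ≤ 1 := by nlinarith
  have ht1 : a^3 ≤ a := by nlinarith [mul_le_mul_of_nonneg_left ha2 h0]
  have ht2 : a^5 ≤ a^3 := by nlinarith [mul_le_mul_of_nonneg_left ha2 (pow_nonneg h0 3)]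
  linarith

theorem unique_solution_near_sqrt_12eps :
    ∃ δ > (0:ℝ), ∃ C > (0:ℝ), ∃ ε₀ > (0:ℝ), ∀ ε : ℝ, 0 < ε → ε ≤ ε₀ →
      ∃ x : ℝ, (x ∈ Set.Ioo 0 δ ∧
          x = 2 * Real.exp ε * Real.sinh x /
            (Real.exp ε * Real.cosh x + Real.exp (-ε)) ∧
          |x - Real.sqrt (12 * ε)| ≤ C * ε ^ ((3:ℝ)/2)) ∧
        ∀ y ∈ Set.Ioo (0:ℝ) δ,
          y = 2 * Real.exp ε * Real.sinh y /
            (Real.exp ε * Real.cosh y + Real.exp (-ε)) → y = x := by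
  refine ⟨1, one_pos, 42, by norm_num, 1/100, by norm_num, fun ε hε hε' => ?_⟩
  obtain ⟨s, hs_def⟩ : ∃ t : ℝ, t = Real.sqrt (12*ε) := ⟨_, rfl⟩
  have hs2 : s^2 = 12*ε := by rw [hs_def]; exact Real.sq_sqrt (by linarith)
  have hs_pos : 0 < s := by rw [hs_def]; exact Real.sqrt_pos.2 (by linarith)
  have hs_le : s ≤ 7/20 := by nlinarith
  have hs_sq : s^2 ≤ 49/400 := by nlinarith
  obtain ⟨u, hu_def⟩ : ∃ t : ℝ, t = Real.exp (2*ε) := ⟨_, rfl⟩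
  have hu_pos : 0 < u := by rw [hu_def]; positivity
  have hu1 : 1 + 2*ε ≤ u := by
    rw [hu_def]; have := Real.add_one_le_exp (2*ε); linarith
  have hu2 : u ≤ 1 + 2*ε + 3*ε^2 := by
    rw [hu_def]
    have hax : |2*ε| ≤ 1 := by rw [abs_of_nonneg (by linarith)]; linarith
    have hb := Real.exp_bound hax (n := 2) (by norm_num)
    rw [abs_of_nonneg (by linarith : (0:ℝ) ≤ 2*ε)] at hb
    simp only [Finset.sum_range_succ, Finset.sum_range_zero] at hb
    norm_num [Nat.factorial] at hb
    rw [abs_le] at hb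
    nlinarith [hb.2]
  obtain ⟨φ, hφ_def⟩ : ∃ f : ℝ → ℝ,
      f = fun x => x + u * (x * Real.cosh x - 2 * Real.sinh x) := ⟨_, rfl⟩
  obtain ⟨ψ, hψ_def⟩ : ∃ f : ℝ → ℝ,
      f = fun x => 1 + u * (x * Real.sinh x - Real.cosh x) := ⟨_, rfl⟩
  have hφx : ∀ x : ℝ, φ x = x + u * (x * Real.cosh x - 2 * Real.sinh x) := by
    intro x; rw [hφ_def]
  -- the equation is equivalent to φ y = 0
  have hkey : ∀ y : ℝ,
      (y = 2 * Real.exp ε * Real.sinh y / (Real.exp ε * Real.cosh y + Real.exp (-ε)))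
        ↔ φ y = 0 := by
    intro y
    have hD : 0 < Real.exp ε * Real.cosh y + Real.exp (-ε) := by positivity
    have h1 : Real.exp ε * Real.exp ε = u := by rw [hu_def, ← Real.exp_add]; ring_nf
    have h2 : Real.exp ε * Real.exp (-ε) = 1 := by rw [← Real.exp_add]; simp
    have hφeq : φ y = Real.exp ε *
        (y * (Real.exp ε * Real.cosh y + Real.exp (-ε)) - 2 * Real.exp ε * Real.sinh y) := by
      rw [hφx y]
      linear_combination (2 * Real.sinh y - y * Real.cosh y) * h1 - y * h2
    rw [eq_div_iff hD.ne', hφeq]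
    constructor
    · intro h; rw [← h]; ring
    · intro h
      rcases mul_eq_zero.1 h with h' | h'
      · exact absurd h' (Real.exp_pos ε).ne'
      · linarith
  -- derivative facts
  have hφ' : ∀ x : ℝ, HasDerivAt φ (ψ x) x := by
    intro x
    rw [hφ_def, hψ_def]
    have h1 : HasDerivAt (fun x : ℝ => x * Real.cosh x - 2 * Real.sinh x)
        (1 * Real.cosh x + x * Real.sinh x - 2 * Real.cosh x) x :=
      ((hasDerivAt_id x).mul (Real.hasDerivAt_cosh x)).sub
        ((Real.hasDerivAt_sinh x).const_mul 2)
    have h2 := (hasDerivAt_id x).add (h1.const_mul u)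
    refine h2.congr_deriv ?_
    simp only []
    ring
  have hψ' : ∀ x : ℝ, HasDerivAt ψ (u * (x * Real.cosh x)) x := by
    intro x
    rw [hψ_def]
    have h1 : HasDerivAt (fun x : ℝ => x * Real.sinh x - Real.cosh x)
        (1 * Real.sinh x + x * Real.cosh x - Real.sinh x) x :=
      ((hasDerivAt_id x).mul (Real.hasDerivAt_sinh x)).sub (Real.hasDerivAt_cosh x)
    have h2 := (h1.const_mul u).const_add 1
    refine h2.congr_deriv ?_
    ring
  have hφcont : Continuous φ := by rw [hφ_def]; fun_prop
  have hψcont : Continuous ψ := by rw [hψ_def]; fun_prop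
  have hmono : StrictMonoOn ψ (Set.Icc (0:ℝ) 1) := by
    apply strictMonoOn_of_deriv_pos (convex_Icc 0 1) hψcont.continuousOn
    intro x hx
    rw [interior_Icc] at hx
    rw [(hψ' x).deriv]
    exact mul_pos hu_pos (mul_pos hx.1 (Real.cosh_pos x))
  have hφ0 : φ 0 = 0 := by rw [hφx 0]; simp
  have hcrit : ∀ p q : ℝ, p < q → φ p = 0 → φ q = 0 → ∃ c ∈ Set.Ioo p q, ψ c = 0 := by
    intro p q hpq hp hq
    obtain ⟨c, hc, hc'⟩ := exists_hasDerivAt_eq_slope φ ψ hpq hφcont.continuousOn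
      (fun x _ => hφ' x)
    exact ⟨c, hc, by rw [hc', hp, hq]; simp⟩
  have huniq : ∀ p q : ℝ, p ∈ Set.Ioo (0:ℝ) 1 → q ∈ Set.Ioo (0:ℝ) 1 →
      φ p = 0 → φ q = 0 → p = q := by
    have main : ∀ p q : ℝ, p ∈ Set.Ioo (0:ℝ) 1 → q ∈ Set.Ioo (0:ℝ) 1 →
        φ p = 0 → φ q = 0 → p < q → False := by
      intro p q hpmem hqmem hp hq hpq
      obtain ⟨c1, hc1, hc1'⟩ := hcrit 0 p hpmem.1 hφ0 hp
      obtain ⟨c2, hc2, hc2'⟩ := hcrit p q hpq hp hq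
      have h12 : c1 < c2 := lt_trans hc1.2 hc2.1
      have hm := hmono (Set.mem_Icc.2 ⟨hc1.1.le, by linarith [hqmem.2, hc1.2, hpmem.2]⟩)
        (Set.mem_Icc.2 ⟨by linarith [hc1.1, hc2.1, hpmem.1], by linarith [hc2.2, hqmem.2]⟩) h12
      rw [hc1', hc2'] at hm
      exact lt_irrefl 0 hm
    intro p q hpmem hqmem hp hq
    rcases lt_trichotomy p q with h | h | h
    · exact absurd (main p q hpmem hqmem hp hq h) not_false
    · exact h
    · exact absurd (main q p hqmem hpmem hq hp h) not_false
  -- interval endpoints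
  obtain ⟨a, ha_def⟩ : ∃ t : ℝ, t = s - s^3 := ⟨_, rfl⟩
  obtain ⟨b, hb_def⟩ : ∃ t : ℝ, t = s + s^3 := ⟨_, rfl⟩
  have ha_pos : 0 < a := by rw [ha_def]; nlinarith
  have hb_le : b ≤ 2/5 := by rw [hb_def]; nlinarith
  have hab : a < b := by rw [ha_def, hb_def]; nlinarith
  have ha_le : a ≤ 2/5 := by linarith
  -- sign of φ at a
  have hφa : φ a < 0 := by
    obtain ⟨_, hB⟩ := h_taylor ha_pos.le ha_le
    have hBneg : -a + a^3/6 + a^5/30 ≤ 0 := poly_c ha_pos.le (by linarith)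
    have step1 : u * (a * Real.cosh a - 2 * Real.sinh a) ≤ u * (-a + a^3/6 + a^5/30) :=
      mul_le_mul_of_nonneg_left hB hu_pos.le
    have step2 : u * (-a + a^3/6 + a^5/30) ≤ (1 + s^2/6) * (-a + a^3/6 + a^5/30) := by
      apply mul_le_mul_of_nonpos_right _ hBneg
      linarith [hu1, hs2]
    have hmain : φ a ≤ a + (1 + s^2/6) * (-a + a^3/6 + a^5/30) := by
      rw [hφx a]; linarith
    refine lt_of_le_of_lt hmain ?_
    rw [ha_def]
    exact poly_a hs_pos hs_sq
  -- sign of φ at b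
  have hφb : 0 < φ b := by
    obtain ⟨hB, _⟩ := h_taylor (by linarith : (0:ℝ) ≤ b) hb_le
    have step1 : u * (-b + b^3/6) ≤ u * (b * Real.cosh b - 2 * Real.sinh b) :=
      mul_le_mul_of_nonneg_left hB hu_pos.le
    have hb0 : (0:ℝ) ≤ b := by linarith
    have hb3 : (0:ℝ) ≤ b^3 := pow_nonneg hb0 3
    have hs4 : s^4 = 144*ε^2 := by
      rw [show s^4 = (s^2)^2 by ring, hs2]; ring
    have hub : u * b ≤ (1 + s^2/6 + s^4/48) * b := by
      apply mul_le_mul_of_nonneg_right _ (by linarith : (0:ℝ) ≤ b)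
      linarith [hu2, hs2, hs4]
    have hub3 : b^3/6 ≤ u * (b^3/6) :=
      le_mul_of_one_le_left (by linarith) (by linarith)
    have hmain : b + (-(1 + s^2/6 + s^4/48) * b + b^3/6) ≤ φ b := by
      rw [hφx b]
      linarith [step1, hub, hub3]
    refine lt_of_lt_of_le ?_ hmain
    rw [hb_def]
    exact poly_b hs_pos
  -- existence of a root in (a,b)
  have hsub := intermediate_value_Ioo (le_of_lt hab) hφcont.continuousOn
  have h0mem : (0:ℝ) ∈ Set.Ioo (φ a) (φ b) := ⟨hφa, hφb⟩
  obtain ⟨x, hxmem, hxroot⟩ := hsub h0mem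
  have hxa : a < x := hxmem.1
  have hxb : x < b := hxmem.2
  have hx01 : x ∈ Set.Ioo (0:ℝ) 1 := ⟨by linarith, by linarith⟩
  refine ⟨x, ⟨hx01, (hkey x).2 hxroot, ?_⟩,
    fun y hy hyeq => huniq y x hy hx01 ((hkey y).1 hyeq) hxroot⟩
  -- the estimate
  have hxs : |x - s| ≤ s^3 := by
    rw [abs_le]
    rw [ha_def] at hxa; rw [hb_def] at hxb
    constructor <;> linarith
  have hsqrt12 : Real.sqrt 12 ≤ 7/2 := by
    rw [show (7:ℝ)/2 = Real.sqrt ((7/2)^2) from (Real.sqrt_sq (by norm_num)).symm]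
    exact Real.sqrt_le_sqrt (by norm_num)
  have hsε : s = Real.sqrt 12 * Real.sqrt ε := by
    rw [hs_def, ← Real.sqrt_mul (by norm_num : (0:ℝ) ≤ 12)]
  have hrpow : ε ^ ((3:ℝ)/2) = ε * Real.sqrt ε := by
    rw [show (3:ℝ)/2 = 1 + 1/2 by norm_num, Real.rpow_add hε, Real.rpow_one,
      ← Real.sqrt_eq_rpow]
  have hs3 : s^3 ≤ 42 * ε ^ ((3:ℝ)/2) := by
    have h1 : s ≤ (7/2) * Real.sqrt ε := by
      rw [hsε]; exact mul_le_mul_of_nonneg_right hsqrt12 (Real.sqrt_nonneg ε)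
    have h2 : s^3 = 12*ε*s := by rw [show s^3 = s^2*s by ring, hs2]
    rw [hrpow, h2]
    calc 12*ε*s ≤ 12*ε*((7/2)*Real.sqrt ε) :=
          mul_le_mul_of_nonneg_left h1 (by linarith)
      _ = 42 * (ε * Real.sqrt ε) := by ring
  rw [← hs_def]
  calc |x - s| ≤ s^3 := hxs
    _ ≤ 42 * ε ^ ((3:ℝ)/2) := hs3
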